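/- Let ζ(y, x'; μ, σ) = log{(σ₀/σ) φ₁((σ₀/σ)(y − (1/σ₀)(μ−μ₀)·x'))} − log φ₁(y), where φ₁ is the standard Cauchy density, σ₀, σ > 0, and μ, μ₀, x' ∈ ℝ^q. Then there is a constant C such that sup over (μ,σ) in any fixed compact subset of ℝ^q × (0,∞) of |ζ(y, x'; μ, σ)| ≤ C(1 + log(1+|x'|))(1 + log(1+|y|)) for all y ∈ ℝ and x' ∈ ℝ^q. -/

import Mathlib

open Real MeasureTheory RealInnerProductSpace

/-- The standard Cauchy density. -/
noncomputable def phi1 (y : ℝ) : ℝ := 1 / (π * (1 + y ^ 2))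

/-- The function `ζ(y, x'; μ, σ)` appearing in the Cauchy quasi-likelihood contrast. -/
noncomputable def zetaFun {q : ℕ} (σ₀ : ℝ) (μ₀ : EuclideanSpace ℝ (Fin q))
    (y : ℝ) (x' : EuclideanSpace ℝ (Fin q)) (μ : EuclideanSpace ℝ (Fin q)) (σ : ℝ) : ℝ :=
  Real.log ((σ₀ / σ) * phi1 ((σ₀ / σ) * (y - (1 / σ₀) * (inner ℝ (μ - μ₀) x' : ℝ)))) -
    Real.log (phi1 y)

private lemma log_phi1 (z : ℝ) : Real.log (phi1 z) = -(Real.log π + Real.log (1 + z ^ 2)) := by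
  have h1 : (0:ℝ) < π := Real.pi_pos
  have h2 : (0:ℝ) < 1 + z ^ 2 := by positivity
  rw [phi1, one_div, Real.log_inv, Real.log_mul h1.ne' h2.ne']

private lemma log_one_add_sq_le (t : ℝ) : Real.log (1 + t ^ 2) ≤ 2 * Real.log (1 + |t|) := by
  have h : (1 : ℝ) + t ^ 2 ≤ (1 + |t|) ^ 2 := by nlinarith [abs_nonneg t, sq_abs t]
  calc Real.log (1 + t ^ 2) ≤ Real.log ((1 + |t|) ^ 2) := Real.log_le_log (by positivity) h
    _ = 2 * Real.log (1 + |t|) := by rw [Real.log_pow]; norm_num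

private lemma two_log_le (t : ℝ) :
    2 * Real.log (1 + |t|) ≤ Real.log 2 + Real.log (1 + t ^ 2) := by
  have h : ((1:ℝ) + |t|) ^ 2 ≤ 2 * (1 + t ^ 2) := by nlinarith [sq_abs t, sq_nonneg (1 - |t|)]
  have h2 : (0:ℝ) < 1 + t ^ 2 := by positivity
  calc 2 * Real.log (1 + |t|) = Real.log ((1 + |t|) ^ 2) := by rw [Real.log_pow]; norm_num
    _ ≤ Real.log (2 * (1 + t ^ 2)) := Real.log_le_log (by positivity) h
    _ = Real.log 2 + Real.log (1 + t ^ 2) := Real.log_mul two_ne_zero h2.ne'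

private lemma log_add_le (u v : ℝ) (hu : 0 ≤ u) (hv : 0 ≤ v) :
    Real.log (1 + (u + v)) ≤ Real.log (1 + u) + Real.log (1 + v) := by
  have h : (1:ℝ) + (u + v) ≤ (1 + u) * (1 + v) := by nlinarith
  calc Real.log (1 + (u + v)) ≤ Real.log ((1 + u) * (1 + v)) :=
        Real.log_le_log (by positivity) h
    _ = Real.log (1 + u) + Real.log (1 + v) :=
        Real.log_mul (by positivity) (by positivity)

private lemma log_mul_self_le (a t : ℝ) :
    Real.log (1 + (a * t) ^ 2) ≤ Real.log (1 + a ^ 2) + Real.log (1 + t ^ 2) := by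
  have h : (1:ℝ) + (a * t) ^ 2 ≤ (1 + a ^ 2) * (1 + t ^ 2) := by nlinarith [sq_nonneg a, sq_nonneg t]
  calc Real.log (1 + (a * t) ^ 2) ≤ Real.log ((1 + a ^ 2) * (1 + t ^ 2)) :=
        Real.log_le_log (by positivity) h
    _ = _ := Real.log_mul (by positivity) (by positivity)

/-- The key scalar estimate. -/
private lemma key_estimate (a c y : ℝ) (ha : 0 < a) :
    |Real.log (1 + (a * (y - c)) ^ 2) - Real.log (1 + y ^ 2)| ≤
      Real.log (1 + a ^ 2) + Real.log 2 + Real.log (1 + (a⁻¹) ^ 2)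
        + 2 * Real.log (1 + |c|) + 2 * Real.log (1 + |y|) := by
  set t := y - c with ht
  have hyc : Real.log (1 + |y|) ≤ Real.log (1 + |t|) + Real.log (1 + |c|) := by
    have h1 : |y| ≤ |t| + |c| := by
      have := abs_add_le t c; simpa [ht] using this
    calc Real.log (1 + |y|) ≤ Real.log (1 + (|t| + |c|)) :=
          Real.log_le_log (by positivity) (by linarith)
      _ ≤ _ := log_add_le _ _ (abs_nonneg t) (abs_nonneg c)
  have htc : Real.log (1 + |t|) ≤ Real.log (1 + |y|) + Real.log (1 + |c|) := by
    have h1 : |t| ≤ |y| + |c| := by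
      calc |t| = |y + -c| := by rw [ht]; ring_nf
        _ ≤ |y| + |(-c)| := abs_add_le _ _
        _ = |y| + |c| := by rw [abs_neg]
    calc Real.log (1 + |t|) ≤ Real.log (1 + (|y| + |c|)) :=
          Real.log_le_log (by positivity) (by linarith)
      _ ≤ _ := log_add_le _ _ (abs_nonneg y) (abs_nonneg c)
  have hlog2 : (0:ℝ) ≤ Real.log 2 := Real.log_nonneg (by norm_num)
  have hn1 : (0:ℝ) ≤ Real.log (1 + a ^ 2) := Real.log_nonneg (by nlinarith [sq_nonneg a])
  have hn2 : (0:ℝ) ≤ Real.log (1 + (a⁻¹) ^ 2) := Real.log_nonneg (by nlinarith [sq_nonneg a⁻¹])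
  have hnc : (0:ℝ) ≤ Real.log (1 + |c|) := Real.log_nonneg (by simp [abs_nonneg])
  have hny : (0:ℝ) ≤ Real.log (1 + |y|) := Real.log_nonneg (by simp [abs_nonneg])
  have hy0 : (0:ℝ) ≤ Real.log (1 + y ^ 2) := Real.log_nonneg (by nlinarith [sq_nonneg y])
  have hu0 : (0:ℝ) ≤ Real.log (1 + (a * t) ^ 2) := Real.log_nonneg (by nlinarith [sq_nonneg (a*t)])
  rw [abs_sub_le_iff]
  constructor
  · -- upper bound
    have h1 := log_mul_self_le a t
    have h2 := log_one_add_sq_le t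
    linarith
  · -- lower bound
    have h1 : Real.log (1 + y ^ 2) ≤ 2 * Real.log (1 + |y|) := log_one_add_sq_le y
    have h2 := two_log_le t
    have h3 : Real.log (1 + t ^ 2) ≤ Real.log (1 + (a⁻¹) ^ 2) + Real.log (1 + (a * t) ^ 2) := by
      have hle : (1:ℝ) + t ^ 2 ≤ (1 + (a⁻¹) ^ 2) * (1 + (a * t) ^ 2) := by
        have haa : a⁻¹ * a = 1 := inv_mul_cancel₀ ha.ne'
        have e : (a⁻¹)^2 * (a*t)^2 = t ^ 2 := by
          field_simp
        nlinarith [sq_nonneg a⁻¹, sq_nonneg (a*t)]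
      calc Real.log (1 + t ^ 2) ≤ Real.log ((1 + (a⁻¹) ^ 2) * (1 + (a * t) ^ 2)) :=
            Real.log_le_log (by positivity) hle
        _ = _ := Real.log_mul (by positivity) (by positivity)
    linarith

/-- Uniformly over compact parameter sets, `|ζ|` is bounded by
`C (1 + log(1+‖x'‖)) (1 + log(1+|y|))`. -/
theorem zetaFun_bound {q : ℕ} {σ₀ : ℝ} (hσ₀ : 0 < σ₀) (μ₀ : EuclideanSpace ℝ (Fin q))
    (S : Set (EuclideanSpace ℝ (Fin q) × ℝ)) (hS : IsCompact S)
    (hSσ : ∀ p ∈ S, 0 < p.2) :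
    ∃ C : ℝ, ∀ (y : ℝ) (x' : EuclideanSpace ℝ (Fin q))
      (μ : EuclideanSpace ℝ (Fin q)) (σ : ℝ), (μ, σ) ∈ S →
        |zetaFun σ₀ μ₀ y x' μ σ| ≤
          C * (1 + Real.log (1 + ‖x'‖)) * (1 + Real.log (1 + |y|)) := by
  rcases S.eq_empty_or_nonempty with hSe | hne
  · exact ⟨0, fun y x' μ σ hmem => by simp [hSe] at hmem⟩
  obtain ⟨p, hpS, hpmin⟩ := hS.exists_isMinOn hne continuous_snd.continuousOn
  have hε : 0 < p.2 := hSσ p hpS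
  set ε := p.2 with hεdef
  obtain ⟨R₀, hR₀⟩ := hS.isBounded.exists_norm_le
  set R := max R₀ ε with hRdef
  have hR : 0 < R := lt_of_lt_of_le hε (le_max_right _ _)
  set M := R + ‖μ₀‖ with hMdef
  have hM : 0 ≤ M := by positivity
  set K := M / σ₀ with hKdef
  have hK : 0 ≤ K := by positivity
  set A := |Real.log σ₀| + (|Real.log ε| + |Real.log R|) + Real.log (1 + (σ₀ / ε) ^ 2)
      + Real.log 2 + Real.log (1 + (R / σ₀) ^ 2) + 2 * Real.log (1 + K) with hAdef
  have hA : 0 ≤ A := by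
    have h1 : (0:ℝ) ≤ Real.log (1 + (σ₀ / ε) ^ 2) := Real.log_nonneg (by nlinarith [sq_nonneg (σ₀/ε)])
    have h2 : (0:ℝ) ≤ Real.log (1 + (R / σ₀) ^ 2) := Real.log_nonneg (by nlinarith [sq_nonneg (R/σ₀)])
    have h3 : (0:ℝ) ≤ Real.log (1 + K) := Real.log_nonneg (by linarith)
    have h4 : (0:ℝ) ≤ Real.log 2 := Real.log_nonneg (by norm_num)
    positivity
  refine ⟨A + 2, fun y x' μ σ hmem => ?_⟩
  have hσε : ε ≤ σ := hpmin hmem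
  have hσpos : 0 < σ := lt_of_lt_of_le hε hσε
  have hσR : σ ≤ R := by
    have h1 : |σ| ≤ ‖(μ, σ)‖ := norm_snd_le (μ, σ)
    have h2 : ‖(μ, σ)‖ ≤ R₀ := hR₀ _ hmem
    calc σ ≤ |σ| := le_abs_self σ
      _ ≤ R₀ := h1.trans h2
      _ ≤ R := le_max_left _ _
  have hμM : ‖μ - μ₀‖ ≤ M := by
    have h1 : ‖μ‖ ≤ ‖(μ, σ)‖ := norm_fst_le (μ, σ)
    have h2 : ‖(μ, σ)‖ ≤ R₀ := hR₀ _ hmem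
    calc ‖μ - μ₀‖ ≤ ‖μ‖ + ‖μ₀‖ := norm_sub_le _ _
      _ ≤ R + ‖μ₀‖ := by
          have : ‖μ‖ ≤ R := (h1.trans h2).trans (le_max_left _ _)
          linarith
  set a := σ₀ / σ with hadef
  have ha : 0 < a := by positivity
  set c := (1 / σ₀) * (inner ℝ (μ - μ₀) x' : ℝ) with hcdef
  have hcK : |c| ≤ K * ‖x'‖ := by
    have h1 : |(inner ℝ (μ - μ₀) x' : ℝ)| ≤ ‖μ - μ₀‖ * ‖x'‖ := abs_real_inner_le_norm _ _
    have h2 : ‖μ - μ₀‖ * ‖x'‖ ≤ M * ‖x'‖ := by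
      apply mul_le_mul_of_nonneg_right hμM (norm_nonneg _)
    rw [hcdef, abs_mul, abs_of_pos (by positivity : (0:ℝ) < 1 / σ₀)]
    calc 1 / σ₀ * |(inner ℝ (μ - μ₀) x' : ℝ)| ≤ 1 / σ₀ * (M * ‖x'‖) := by
          apply mul_le_mul_of_nonneg_left (h1.trans h2) (by positivity)
      _ = K * ‖x'‖ := by rw [hKdef]; ring
  -- rewrite ζ
  have hphi1 : ∀ z : ℝ, (0:ℝ) < phi1 z := fun z => by
    rw [phi1]; positivity
  have hζ : zetaFun σ₀ μ₀ y x' μ σ =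
      Real.log a + (Real.log (1 + y ^ 2) - Real.log (1 + (a * (y - c)) ^ 2)) := by
    rw [zetaFun, Real.log_mul ha.ne' (hphi1 _).ne', log_phi1, log_phi1]
    ring
  have hbound := key_estimate a c y ha
  -- bounds on constants
  have hloga : |Real.log a| ≤ |Real.log σ₀| + (|Real.log ε| + |Real.log R|) := by
    have h0 : Real.log a = Real.log σ₀ - Real.log σ := Real.log_div hσ₀.ne' hσpos.ne'
    have h1 : Real.log ε ≤ Real.log σ := Real.log_le_log hε hσε
    have h2 : Real.log σ ≤ Real.log R := Real.log_le_log hσpos hσR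
    have h3 : |Real.log σ| ≤ |Real.log ε| + |Real.log R| := by
      rw [abs_le]
      constructor
      · have := neg_abs_le (Real.log ε)
        have := abs_nonneg (Real.log R)
        linarith
      · have := le_abs_self (Real.log R)
        have := abs_nonneg (Real.log ε)
        linarith
    calc |Real.log a| = |Real.log σ₀ - Real.log σ| := by rw [h0]
      _ ≤ |Real.log σ₀| + |Real.log σ| := abs_sub _ _
      _ ≤ _ := by linarith
  have ha2 : Real.log (1 + a ^ 2) ≤ Real.log (1 + (σ₀ / ε) ^ 2) := by
    apply Real.log_le_log (by positivity)
    have h1 : a ≤ σ₀ / ε := by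
      rw [hadef]
      apply div_le_div_of_nonneg_left hσ₀.le hε hσε
    nlinarith [ha.le]
  have hainv : Real.log (1 + (a⁻¹) ^ 2) ≤ Real.log (1 + (R / σ₀) ^ 2) := by
    apply Real.log_le_log (by positivity)
    have h1 : a⁻¹ = σ / σ₀ := by rw [hadef]; field_simp
    have h2 : σ / σ₀ ≤ R / σ₀ := div_le_div_of_nonneg_right hσR hσ₀.le
    have h4 : (σ / σ₀) ^ 2 ≤ (R / σ₀) ^ 2 := pow_le_pow_left₀ (by positivity) h2 2
    rw [h1]
    linarith
  have hc2 : Real.log (1 + |c|) ≤ Real.log (1 + K) + Real.log (1 + ‖x'‖) := by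
    have h1 : (1:ℝ) + |c| ≤ (1 + K) * (1 + ‖x'‖) := by
      have hexp : (1 + K) * (1 + ‖x'‖) = 1 + K + ‖x'‖ + K * ‖x'‖ := by ring
      linarith [hcK, hK, norm_nonneg x']
    calc Real.log (1 + |c|) ≤ Real.log ((1 + K) * (1 + ‖x'‖)) :=
          Real.log_le_log (by positivity) h1
      _ = _ := Real.log_mul (by positivity) (by positivity)
  set X := Real.log (1 + ‖x'‖) with hXdef
  set Y := Real.log (1 + |y|) with hYdef
  have hX : 0 ≤ X := Real.log_nonneg (by simp [norm_nonneg])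
  have hY : 0 ≤ Y := Real.log_nonneg (by simp [abs_nonneg])
  have hfinal : |zetaFun σ₀ μ₀ y x' μ σ| ≤ A + 2 * X + 2 * Y := by
    have h1 : |zetaFun σ₀ μ₀ y x' μ σ| ≤
        |Real.log a| + |Real.log (1 + (a * (y - c)) ^ 2) - Real.log (1 + y ^ 2)| := by
      rw [hζ]
      calc |Real.log a + (Real.log (1 + y ^ 2) - Real.log (1 + (a * (y - c)) ^ 2))|
          ≤ |Real.log a| + |Real.log (1 + y ^ 2) - Real.log (1 + (a * (y - c)) ^ 2)| :=
            abs_add_le _ _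
        _ = _ := by rw [abs_sub_comm]
    rw [hAdef]
    linarith [hbound, hloga, ha2, hainv, hc2]
  calc |zetaFun σ₀ μ₀ y x' μ σ| ≤ A + 2 * X + 2 * Y := hfinal
    _ ≤ (A + 2) * (1 + X) * (1 + Y) := by
        have hexp : (A + 2) * (1 + X) * (1 + Y)
            = A + 2 + (A * X + 2 * X) + (A * Y + 2 * Y) + (A * (X * Y) + 2 * (X * Y)) := by
          ring
        linarith [mul_nonneg hA hX, mul_nonneg hA hY, mul_nonneg hX hY,
          mul_nonneg hA (mul_nonneg hX hY)]
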